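/- Let μ be an entire, finite, nondegenerate, nonlocalized, irreducible projection and Γ ∈ M_{ℓ,K}(ℤ) a nonzero matrix with nonnegative entries. If θ, θ′ ∈ ℝ^K are both critical, Γ-equivalent, and Γ X_θ and Γ X_{θ′} are collinear, then θ = θ′. In particular (taking Γ = I_K), distinct critical tiltings have distinct asymptotic directions. -/

import Mathlib

open scoped BigOperators

/-- Spectral radius of a real square matrix. -/
noncomputable def matrixSpectralRadius {n : ℕ} (M : Matrix (Fin n) (Fin n) ℝ) : ℝ :=
  sSup ((fun z : ℂ => ‖z‖) '' spectrum ℂ (M.map (Complex.ofReal)))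



lemma aux_cs3 (x1 x2 x3 y1 y2 y3 : ℝ) (hx1 : 0 ≤ x1) (hx2 : 0 ≤ x2) (hx3 : 0 ≤ x3)
    (hy1 : 0 ≤ y1) (hy2 : 0 ≤ y2) (hy3 : 0 ≤ y3) (hne : x1*y2 ≠ x2*y1) :
    x1*y1 + x2*y2 + x3*y3 < Real.sqrt (x1^2+x2^2+x3^2) * Real.sqrt (y1^2+y2^2+y3^2) := by
  rw [← Real.sqrt_mul (by positivity)]
  rw [show x1*y1 + x2*y2 + x3*y3 = Real.sqrt ((x1*y1+x2*y2+x3*y3)^2) from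
    (Real.sqrt_sq (by positivity)).symm]
  apply Real.sqrt_lt_sqrt (by positivity)
  have h := lt_of_le_of_ne (sq_nonneg (x1*y2 - x2*y1)) (Ne.symm (pow_ne_zero 2 (sub_ne_zero.mpr hne)))
  nlinarith [sq_nonneg (x1*y3 - x3*y1), sq_nonneg (x2*y3 - x3*y2)]

lemma summable_sqrt_mul {ι : Type*} {a b : ι → ℝ} (ha0 : ∀ i, 0 ≤ a i) (hb0 : ∀ i, 0 ≤ b i)
    (ha : Summable a) (hb : Summable b) : Summable (fun i => Real.sqrt (a i * b i)) := by
  apply Summable.of_nonneg_of_le (fun i => Real.sqrt_nonneg _) (fun i => ?_) ((ha.add hb).div_const 2)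
  have h1 : Real.sqrt (a i * b i) = Real.sqrt (a i) * Real.sqrt (b i) := Real.sqrt_mul (ha0 i) _
  have h2 : Real.sqrt (a i) ^ 2 = a i := Real.sq_sqrt (ha0 i)
  have h3 : Real.sqrt (b i) ^ 2 = b i := Real.sq_sqrt (hb0 i)
  nlinarith [sq_nonneg (Real.sqrt (a i) - Real.sqrt (b i))]

lemma tsum_cs {ι : Type*} {a b : ι → ℝ} (ha0 : ∀ i, 0 ≤ a i) (hb0 : ∀ i, 0 ≤ b i)
    (ha : Summable a) (hb : Summable b) :
    ∑' i, Real.sqrt (a i * b i) ≤ Real.sqrt (∑' i, a i) * Real.sqrt (∑' i, b i) := by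
  apply Summable.tsum_le_of_sum_le (summable_sqrt_mul ha0 hb0 ha hb)
  intro s
  calc ∑ i ∈ s, Real.sqrt (a i * b i) = ∑ i ∈ s, Real.sqrt (a i) * Real.sqrt (b i) := by
        refine Finset.sum_congr rfl fun i _ => Real.sqrt_mul (ha0 i) _
    _ ≤ Real.sqrt (∑ i ∈ s, a i) * Real.sqrt (∑ i ∈ s, b i) :=
        Real.sum_sqrt_mul_sqrt_le s ha0 hb0
    _ ≤ Real.sqrt (∑' i, a i) * Real.sqrt (∑' i, b i) := by
        apply mul_le_mul (Real.sqrt_le_sqrt (Summable.sum_le_tsum s (fun i _ => ha0 i) ha))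
          (Real.sqrt_le_sqrt (Summable.sum_le_tsum s (fun i _ => hb0 i) hb))
          (Real.sqrt_nonneg _) (Real.sqrt_nonneg _)

lemma tsum_cs_strict {ι : Type*} [DecidableEq ι] {a b : ι → ℝ}
    (ha0 : ∀ i, 0 ≤ a i) (hb0 : ∀ i, 0 ≤ b i)
    (ha : Summable a) (hb : Summable b) (k0 k1 : ι) (hk : k0 ≠ k1)
    (hne : a k0 * b k1 ≠ a k1 * b k0) :
    ∑' i, Real.sqrt (a i * b i) < Real.sqrt (∑' i, a i) * Real.sqrt (∑' i, b i) := by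
  classical
  have decomp : ∀ (f : ι → ℝ), (∀ i, 0 ≤ f i) → Summable f →
      ∑' i, f i = f k0 + f k1 + ∑' i, (if i = k1 then 0 else if i = k0 then 0 else f i) := by
    intro f hf0 hf
    have hg0 : ∀ i, 0 ≤ (if i = k0 then 0 else f i) := fun i => by split_ifs <;> simp [hf0 i]
    have hg : Summable (fun i => if i = k0 then 0 else f i) := by
      apply Summable.of_nonneg_of_le hg0 (fun i => ?_) hf
      split_ifs <;> simp [hf0 i]
    have h1 := Summable.tsum_eq_add_tsum_ite hf k0
    have h2 := Summable.tsum_eq_add_tsum_ite hg k1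
    rw [h1, h2, if_neg (Ne.symm hk)]
    ring
  have key0 : ∀ i, 0 ≤ Real.sqrt (a i * b i) := fun i => Real.sqrt_nonneg _
  have hs := summable_sqrt_mul ha0 hb0 ha hb
  have dA := decomp a ha0 ha
  have dB := decomp b hb0 hb
  have dS := decomp _ key0 hs
  set a' : ι → ℝ := fun i => if i = k1 then 0 else if i = k0 then 0 else a i with ha'def
  set b' : ι → ℝ := fun i => if i = k1 then 0 else if i = k0 then 0 else b i with hb'def
  have ha'0 : ∀ i, 0 ≤ a' i := fun i => by simp only [ha'def]; split_ifs <;> simp [ha0 i]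
  have hb'0 : ∀ i, 0 ≤ b' i := fun i => by simp only [hb'def]; split_ifs <;> simp [hb0 i]
  have ha' : Summable a' := by
    apply Summable.of_nonneg_of_le ha'0 (fun i => ?_) ha
    simp only [ha'def]; split_ifs <;> simp [ha0 i]
  have hb' : Summable b' := by
    apply Summable.of_nonneg_of_le hb'0 (fun i => ?_) hb
    simp only [hb'def]; split_ifs <;> simp [hb0 i]
  have hptw : ∀ i, (if i = k1 then (0:ℝ) else if i = k0 then 0 else Real.sqrt (a i * b i))
      = Real.sqrt (a' i * b' i) := by
    intro i; simp only [ha'def, hb'def]; split_ifs <;> simp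
  have hT : ∑' i, (if i = k1 then (0:ℝ) else if i = k0 then 0 else Real.sqrt (a i * b i))
      ≤ Real.sqrt (∑' i, a' i) * Real.sqrt (∑' i, b' i) := by
    rw [tsum_congr hptw]
    exact tsum_cs ha'0 hb'0 ha' hb'
  have hA' : 0 ≤ ∑' i, a' i := tsum_nonneg ha'0
  have hB' : 0 ≤ ∑' i, b' i := tsum_nonneg hb'0
  -- apply 3-dim strict Cauchy-Schwarz
  have h3 := aux_cs3 (Real.sqrt (a k0)) (Real.sqrt (a k1)) (Real.sqrt (∑' i, a' i))
      (Real.sqrt (b k0)) (Real.sqrt (b k1)) (Real.sqrt (∑' i, b' i))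
      (Real.sqrt_nonneg _) (Real.sqrt_nonneg _) (Real.sqrt_nonneg _)
      (Real.sqrt_nonneg _) (Real.sqrt_nonneg _) (Real.sqrt_nonneg _)
      (by
        intro h
        apply hne
        have := congrArg (fun x : ℝ => x ^ 2) h
        simp only [mul_pow, Real.sq_sqrt (ha0 k0), Real.sq_sqrt (hb0 k1),
          Real.sq_sqrt (ha0 k1), Real.sq_sqrt (hb0 k0)] at this
        exact this)
  have hsq : ∀ (c : ι → ℝ), (∀ i, 0 ≤ c i) → Real.sqrt (c k0) ^ 2 + Real.sqrt (c k1) ^ 2 +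
      Real.sqrt (∑' i, (if i = k1 then 0 else if i = k0 then 0 else c i)) ^ 2
      = c k0 + c k1 + ∑' i, (if i = k1 then 0 else if i = k0 then 0 else c i) := by
    intro c hc0
    rw [Real.sq_sqrt (hc0 k0), Real.sq_sqrt (hc0 k1), Real.sq_sqrt (tsum_nonneg (fun i => by
      split_ifs <;> simp [hc0 i]))]
  rw [hsq a ha0, hsq b hb0, ← dA, ← dB] at h3
  calc ∑' i, Real.sqrt (a i * b i)
      = Real.sqrt (a k0 * b k0) + Real.sqrt (a k1 * b k1)
        + ∑' i, (if i = k1 then (0:ℝ) else if i = k0 then 0 else Real.sqrt (a i * b i)) := dS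
    _ ≤ Real.sqrt (a k0 * b k0) + Real.sqrt (a k1 * b k1)
        + Real.sqrt (∑' i, a' i) * Real.sqrt (∑' i, b' i) := by linarith
    _ = Real.sqrt (a k0) * Real.sqrt (b k0) + Real.sqrt (a k1) * Real.sqrt (b k1)
        + Real.sqrt (∑' i, a' i) * Real.sqrt (∑' i, b' i) := by
          rw [Real.sqrt_mul (ha0 k0), Real.sqrt_mul (ha0 k1)]
    _ < Real.sqrt (∑' i, a i) * Real.sqrt (∑' i, b i) := h3



lemma tsum_exp_ge {ι : Type*} {a w : ι → ℝ} (ha0 : ∀ i, 0 ≤ a i) (ha : Summable a)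
    (hw : Summable (fun i => a i * w i)) (he : Summable (fun i => a i * Real.exp (w i)))
    (hA : 0 < ∑' i, a i) :
    Real.exp ((∑' i, a i * w i) / ∑' i, a i) * (∑' i, a i) ≤ ∑' i, a i * Real.exp (w i) := by
  set A := ∑' i, a i with hAdef
  set W := ∑' i, a i * w i with hWdef
  set m := W / A with hmdef
  have hsum1 : Summable (fun i => Real.exp m * ((1 - m) * a i + a i * w i)) :=
    ((ha.mul_left (1 - m)).add hw).mul_left _
  have h1 : ∑' i, Real.exp m * ((1 - m) * a i + a i * w i) = Real.exp m * ((1 - m) * A + W) := by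
    rw [tsum_mul_left, Summable.tsum_add (ha.mul_left (1 - m)) hw, tsum_mul_left]
  have h2 : Real.exp m * ((1 - m) * A + W) = Real.exp m * A := by
    have hmA : m * A = W := by rw [hmdef, div_mul_cancel₀ W (ne_of_gt hA)]
    calc Real.exp m * ((1 - m) * A + W) = Real.exp m * (A - m * A + W) := by ring
      _ = Real.exp m * A := by rw [hmA]; ring
  have hptw : ∀ i, Real.exp m * ((1 - m) * a i + a i * w i) ≤ a i * Real.exp (w i) := by
    intro i
    have h3 : (w i - m) + 1 ≤ Real.exp (w i - m) := Real.add_one_le_exp _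
    have h4 : Real.exp m * ((w i - m) + 1) ≤ Real.exp m * Real.exp (w i - m) :=
      mul_le_mul_of_nonneg_left h3 (Real.exp_pos m).le
    rw [← Real.exp_add] at h4
    have h5 : m + (w i - m) = w i := by ring
    rw [h5] at h4
    calc Real.exp m * ((1 - m) * a i + a i * w i)
        = a i * (Real.exp m * ((w i - m) + 1)) := by ring
      _ ≤ a i * Real.exp (w i) := mul_le_mul_of_nonneg_left h4 (ha0 i)
  calc Real.exp m * A = ∑' i, Real.exp m * ((1 - m) * a i + a i * w i) := by rw [h1, h2]
    _ ≤ ∑' i, a i * Real.exp (w i) := Summable.tsum_le_tsum hptw hsum1 he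



lemma prod_exp_pow {K : ℕ} (t : Fin K → ℝ) (k : Fin K → ℕ) :
    ∏ j, Real.exp (t j) ^ k j = Real.exp (∑ l, t l * k l) := by
  rw [Real.exp_sum]
  refine Finset.prod_congr rfl fun j _ => ?_
  rw [← Real.exp_nat_mul, mul_comm]

lemma summable_exp_w {K : ℕ} (μi : (Fin K → ℕ) → ℝ)
    (h : ∀ x : Fin K → ℝ, Summable (fun k => μi k * ∏ j, x j ^ k j)) (t : Fin K → ℝ) :
    Summable (fun k : Fin K → ℕ => μi k * Real.exp (∑ l, t l * k l)) := by
  have := h (fun j => Real.exp (t j))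
  simpa [prod_exp_pow] using this

lemma summable_lin {K : ℕ} (μi : (Fin K → ℕ) → ℝ) (h0 : ∀ k, 0 ≤ μi k)
    (h : ∀ x : Fin K → ℝ, Summable (fun k => μi k * ∏ j, x j ^ k j)) (t c : Fin K → ℝ) :
    Summable (fun k : Fin K → ℕ =>
      μi k * Real.exp (∑ l, t l * k l) * (∑ l, c l * (k l : ℝ))) := by
  rw [← summable_abs_iff]
  have h1 : Summable (fun k : Fin K → ℕ => μi k * Real.exp (∑ l, (t l + c l) * k l)) :=
    summable_exp_w μi h (t + c) |>.congr (fun k => by simp)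
  have h2 : Summable (fun k : Fin K → ℕ => μi k * Real.exp (∑ l, (t l - c l) * k l)) :=
    summable_exp_w μi h (t - c) |>.congr (fun k => by simp)
  apply Summable.of_nonneg_of_le (fun k => abs_nonneg _) (fun k => ?_) (h1.add h2)
  set T := ∑ l, t l * (k l : ℝ)
  set y := ∑ l, c l * (k l : ℝ)
  have hTy : ∑ l, (t l + c l) * (k l : ℝ) = T + y := by
    rw [← Finset.sum_add_distrib]; exact Finset.sum_congr rfl fun l _ => by ring
  have hTy' : ∑ l, (t l - c l) * (k l : ℝ) = T - y := by
    rw [← Finset.sum_sub_distrib]; exact Finset.sum_congr rfl fun l _ => by ring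
  rw [hTy, hTy']
  have habs : |μi k * Real.exp T * y| = μi k * Real.exp T * |y| := by
    rw [abs_mul, abs_of_nonneg (mul_nonneg (h0 k) (Real.exp_pos T).le)]
  rw [habs]
  have hy : |y| ≤ Real.exp y + Real.exp (-y) := by
    rcases abs_cases y with ⟨h1, _⟩ | ⟨h1, _⟩
    · nlinarith [Real.add_one_le_exp y, Real.exp_pos (-y)]
    · nlinarith [Real.add_one_le_exp (-y), Real.exp_pos y]
  calc μi k * Real.exp T * |y| ≤ μi k * Real.exp T * (Real.exp y + Real.exp (-y)) := by
        apply mul_le_mul_of_nonneg_left hy (mul_nonneg (h0 k) (Real.exp_pos T).le)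
    _ = μi k * Real.exp (T + y) + μi k * Real.exp (T - y) := by
        rw [show T - y = T + (-y) by ring, Real.exp_add, Real.exp_add]
        ring

lemma summable_coord {K : ℕ} (μi : (Fin K → ℕ) → ℝ) (h0 : ∀ k, 0 ≤ μi k)
    (h : ∀ x : Fin K → ℝ, Summable (fun k => μi k * ∏ j, x j ^ k j)) (t : Fin K → ℝ)
    (j : Fin K) :
    Summable (fun k : Fin K → ℕ => μi k * Real.exp (∑ l, t l * k l) * (k j : ℝ)) := by
  have := summable_lin μi h0 h t (Pi.single j 1)
  apply this.congr
  intro k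
  congr 1
  simp [Pi.single_apply]

lemma mu_exists_pos {K : ℕ} (μi : (Fin K → ℕ) → ℝ) (h0 : ∀ k, 0 ≤ μi k)
    (h1 : HasSum μi 1) : ∃ k, 0 < μi k := by
  by_contra h
  push_neg at h
  have : μi = 0 := funext fun k => le_antisymm (h k) (h0 k)
  rw [this] at h1
  exact one_ne_zero (h1.unique hasSum_zero)

lemma S_pos {K : ℕ} (μi : (Fin K → ℕ) → ℝ) (h0 : ∀ k, 0 ≤ μi k) (h1 : HasSum μi 1)
    (h : ∀ x : Fin K → ℝ, Summable (fun k => μi k * ∏ j, x j ^ k j)) (t : Fin K → ℝ) :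
    0 < ∑' k : Fin K → ℕ, μi k * Real.exp (∑ l, t l * k l) := by
  obtain ⟨k0, hk0⟩ := mu_exists_pos μi h0 h1
  exact Summable.tsum_pos (summable_exp_w μi h t)
    (fun k => mul_nonneg (h0 k) (Real.exp_pos _).le) k0
    (mul_pos hk0 (Real.exp_pos _))

lemma grad_key (K : ℕ) (μ : Fin K → (Fin K → ℕ) → ℝ)
    (hpos : ∀ i k, 0 ≤ μ i k) (hsum : ∀ i, HasSum (μ i) 1)
    (hent : ∀ i (x : Fin K → ℝ), Summable fun k : Fin K → ℕ => μ i k * ∏ j, x j ^ k j)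
    (t u : Fin K → ℝ) (Mt : Matrix (Fin K) (Fin K) ℝ)
    (hMt : ∀ i j, Mt i j = (∑' k : Fin K → ℕ, μ i k * Real.exp (∑ l, t l * k l) * k j) /
      (∑' k : Fin K → ℕ, μ i k * Real.exp (∑ l, t l * k l)))
    (Xv : Fin K → ℝ) (hXv : ∀ i, 0 ≤ Xv i) (heig : Matrix.vecMul Xv Mt = Xv) :
    ∑ i, Xv i * Real.log (∑' k : Fin K → ℕ, μ i k * Real.exp (∑ l, t l * k l))
      + ∑ l, (u l - t l) * Xv l
    ≤ ∑ i, Xv i * Real.log (∑' k : Fin K → ℕ, μ i k * Real.exp (∑ l, u l * k l)) := by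
  classical
  set c : Fin K → ℝ := fun l => u l - t l with hcdef
  -- the per-index inequality
  have main : ∀ i, Real.log (∑' k : Fin K → ℕ, μ i k * Real.exp (∑ l, t l * k l))
      + ∑ l, c l * Mt i l
      ≤ Real.log (∑' k : Fin K → ℕ, μ i k * Real.exp (∑ l, u l * k l)) := by
    intro i
    set a : (Fin K → ℕ) → ℝ := fun k => μ i k * Real.exp (∑ l, t l * k l) with hadef
    set w : (Fin K → ℕ) → ℝ := fun k => ∑ l, c l * (k l : ℝ) with hwdef
    have ha0 : ∀ k, 0 ≤ a k := fun k => mul_nonneg (hpos i k) (Real.exp_pos _).le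
    have ha : Summable a := summable_exp_w (μ i) (hent i) t
    have hw : Summable (fun k => a k * w k) := summable_lin (μ i) (hpos i) (hent i) t c
    have hA : 0 < ∑' k, a k := S_pos (μ i) (hpos i) (hsum i) (hent i) t
    have heq : ∀ k : Fin K → ℕ, a k * Real.exp (w k) = μ i k * Real.exp (∑ l, u l * k l) := by
      intro k
      rw [hadef, hwdef]
      simp only
      rw [mul_assoc, ← Real.exp_add]
      congr 2
      rw [← Finset.sum_add_distrib]
      exact Finset.sum_congr rfl fun l _ => by rw [hcdef]; ring
    have he : Summable (fun k => a k * Real.exp (w k)) := by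
      rw [funext heq]; exact summable_exp_w (μ i) (hent i) u
    have hkey := tsum_exp_ge ha0 ha hw he hA
    rw [tsum_congr heq] at hkey
    -- compute the mean W / A
    have hWsum : ∑' k, a k * w k = ∑ l, c l * (Mt i l * ∑' k, a k) := by
      have step1 : ∀ k : Fin K → ℕ, a k * w k = ∑ l, c l * (a k * k l) := by
        intro k
        show a k * (∑ l, c l * (k l : ℝ)) = _
        rw [Finset.mul_sum]
        exact Finset.sum_congr rfl fun l _ => by ring
      rw [tsum_congr step1, Summable.tsum_finsetSum (fun l _ => ((summable_coord (μ i) (hpos i)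
        (hent i) t l).mul_left (c l)).congr (fun k => by rw [hadef]))]
      refine Finset.sum_congr rfl fun l _ => ?_
      have : ∑' k, c l * (a k * k l) = c l * ∑' k, a k * k l := tsum_mul_left
      rw [this]
      congr 1
      have hnum : ∑' k : Fin K → ℕ, a k * (k l : ℝ)
          = ∑' k : Fin K → ℕ, μ i k * Real.exp (∑ l', t l' * k l') * (k l : ℝ) := rfl
      rw [hnum, hMt i l, div_mul_cancel₀]
      exact ne_of_gt hA
    have hm : (∑' k, a k * w k) / (∑' k, a k) = ∑ l, c l * Mt i l := by
      rw [hWsum]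
      rw [show ∑ l, c l * (Mt i l * ∑' k, a k) = (∑ l, c l * Mt i l) * ∑' k, a k by
        rw [Finset.sum_mul]; exact Finset.sum_congr rfl fun l _ => by ring]
      exact mul_div_cancel_right₀ _ (ne_of_gt hA)
    have hlog := Real.log_le_log_iff (by positivity) (by
      calc (0:ℝ) < Real.exp ((∑' k, a k * w k) / ∑' k, a k) * (∑' k, a k) := by positivity
        _ ≤ _ := hkey) |>.mpr hkey
    rw [Real.log_mul (Real.exp_ne_zero _) (ne_of_gt hA), Real.log_exp, hm] at hlog
    linarith
  -- sum against Xv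
  have step : ∑ i, Xv i * (Real.log (∑' k : Fin K → ℕ, μ i k * Real.exp (∑ l, t l * k l))
      + ∑ l, c l * Mt i l)
      ≤ ∑ i, Xv i * Real.log (∑' k : Fin K → ℕ, μ i k * Real.exp (∑ l, u l * k l)) :=
    Finset.sum_le_sum fun i _ => mul_le_mul_of_nonneg_left (main i) (hXv i)
  have expand1 : ∑ i, Xv i * (Real.log (∑' k : Fin K → ℕ, μ i k * Real.exp (∑ l, t l * k l))
      + ∑ l, c l * Mt i l)
      = ∑ i, Xv i * Real.log (∑' k : Fin K → ℕ, μ i k * Real.exp (∑ l, t l * k l))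
        + ∑ i, Xv i * ∑ l, c l * Mt i l := by
    simp only [mul_add]; exact Finset.sum_add_distrib
  have swap : ∑ i, Xv i * ∑ l, c l * Mt i l = ∑ l, c l * Xv l := by
    calc ∑ i, Xv i * ∑ l, c l * Mt i l = ∑ i, ∑ l, Xv i * (c l * Mt i l) := by
          exact Finset.sum_congr rfl fun i _ => Finset.mul_sum _ _ _
      _ = ∑ l, ∑ i, Xv i * (c l * Mt i l) := Finset.sum_comm
      _ = ∑ l, c l * ∑ i, Xv i * Mt i l := by
          refine Finset.sum_congr rfl fun l _ => ?_
          rw [Finset.mul_sum]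
          exact Finset.sum_congr rfl fun i _ => by ring
      _ = ∑ l, c l * Xv l := by
          refine Finset.sum_congr rfl fun l _ => ?_
          congr 1
          have := congrFun heig l
          simpa [Matrix.vecMul, dotProduct] using this
  rw [expand1, swap] at step
  have hfin : ∑ l, c l * Xv l = ∑ l, (u l - t l) * Xv l := rfl
  linarith [step]


/-- for an entire, finite, nondegenerate, nonlocalized,
irreducible projection `μ` and a nonzero integer matrix `Γ` with nonnegative
entries, if `θ` and `θ'` are both critical tilting parameters, are
`Γ`-equivalent (`χ(θ) − χ(θ') ∈ Im Γᵀ`), and `Γ X_θ`, `Γ X_{θ'}` are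
collinear, then `θ = θ'`. -/
theorem gamma_equivalent_critical_tiltings_injective
    (K ℓ : ℕ) (μ : Fin K → (Fin K → ℕ) → ℝ)
    (hpos : ∀ i k, 0 ≤ μ i k) (hsum : ∀ i, HasSum (μ i) 1)
    (hent : ∀ i (x : Fin K → ℝ), Summable (fun k : Fin K → ℕ => μ i k * ∏ j, x j ^ k j))
    (φ : Fin K → (Fin K → ℝ) → ℝ)
    (hφ : ∀ i x, φ i x = ∑' k : Fin K → ℕ, μ i k * ∏ j, x j ^ k j)
    (hfin : ∃ p : Fin K → ℝ, (∀ i, 0 < p i ∧ p i ≤ 1) ∧ ∀ i, φ i p = p i)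
    (hnondeg : ∃ (i : Fin K) (k : Fin K → ℕ), 2 ≤ ∑ j, k j ∧ 0 < μ i k)
    (hnonloc : ∀ Z : Fin K → ℝ, Z ≠ 0 →
      ∃ (i : Fin K) (k k' : Fin K → ℕ), 0 < μ i k ∧ 0 < μ i k' ∧
        (∑ j, Z j * k j) ≠ (∑ j, Z j * k' j))
    (M : Matrix (Fin K) (Fin K) ℝ)
    (hM : ∀ i j, M i j = ∑' k : Fin K → ℕ, μ i k * k j)
    (hirr : ∀ i j, ∃ m : ℕ, 0 < m ∧ 0 < (M ^ m) i j)
    (χ : (Fin K → ℝ) → Fin K → ℝ)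
    (hχ : ∀ t i, χ t i = Real.log (φ i (fun j => Real.exp (t j))) - t i)
    -- the matrix Γ : nonzero, with nonnegative integer entries
    (Γ : Matrix (Fin ℓ) (Fin K) ℤ) (hΓ : Γ ≠ 0) (hΓnonneg : ∀ a i, 0 ≤ Γ a i)
    -- two critical parameters θ, θ' with their tilted mean matrices
    (θ θ' : Fin K → ℝ)
    (Mθ Mθ' : Matrix (Fin K) (Fin K) ℝ)
    (hMθ : ∀ i j, Mθ i j =
      (∑' k : Fin K → ℕ, μ i k * Real.exp (∑ l, θ l * k l) * k j) /
        (∑' k : Fin K → ℕ, μ i k * Real.exp (∑ l, θ l * k l)))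
    (hMθ' : ∀ i j, Mθ' i j =
      (∑' k : Fin K → ℕ, μ i k * Real.exp (∑ l, θ' l * k l) * k j) /
        (∑' k : Fin K → ℕ, μ i k * Real.exp (∑ l, θ' l * k l)))
    (hcrit : matrixSpectralRadius Mθ = 1)
    (hcrit' : matrixSpectralRadius Mθ' = 1)
    -- the asymptotic directions
    (X X' : Fin K → ℝ)
    (hXpos : ∀ i, 0 < X i) (hXnorm : ∑ i, X i = 1) (hXeig : Matrix.vecMul X Mθ = X)
    (hX'pos : ∀ i, 0 < X' i) (hX'norm : ∑ i, X' i = 1)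
    (hX'eig : Matrix.vecMul X' Mθ' = X')
    -- Γ-equivalence: χ(θ) − χ(θ') ∈ Im(Γᵀ)
    (hequiv : ∃ R : Fin ℓ → ℝ, ∀ i, χ θ i - χ θ' i = ∑ a, (Γ a i : ℝ) * R a)
    -- Γ X_θ and Γ X_{θ'} are collinear
    (hcol : ∃ lam : ℝ,
      (Γ.map (Int.cast : ℤ → ℝ)).mulVec X = lam • (Γ.map (Int.cast : ℤ → ℝ)).mulVec X'
      ∨ (Γ.map (Int.cast : ℤ → ℝ)).mulVec X' = lam • (Γ.map (Int.cast : ℤ → ℝ)).mulVec X) :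
    θ = θ' := by
  classical
  by_contra hne
  -- the direction Z and the midpoint
  set Z : Fin K → ℝ := fun j => θ' j - θ j with hZdef
  have hZ : Z ≠ 0 := by
    intro h
    apply hne
    funext j
    have := congrFun h j
    simp only [hZdef, Pi.zero_apply] at this
    linarith
  set mid : Fin K → ℝ := fun j => (θ j + θ' j) / 2 with hmiddef
  -- partition functions
  set Sθ : Fin K → ℝ := fun i => ∑' k : Fin K → ℕ, μ i k * Real.exp (∑ l, θ l * k l)
    with hSθdef
  set Sθ' : Fin K → ℝ := fun i => ∑' k : Fin K → ℕ, μ i k * Real.exp (∑ l, θ' l * k l)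
    with hSθ'def
  set Sm : Fin K → ℝ := fun i => ∑' k : Fin K → ℕ, μ i k * Real.exp (∑ l, mid l * k l)
    with hSmdef
  have hSθpos : ∀ i, 0 < Sθ i := fun i => S_pos (μ i) (hpos i) (hsum i) (hent i) θ
  have hSθ'pos : ∀ i, 0 < Sθ' i := fun i => S_pos (μ i) (hpos i) (hsum i) (hent i) θ'
  have hSmpos : ∀ i, 0 < Sm i := fun i => S_pos (μ i) (hpos i) (hsum i) (hent i) mid
  -- the key sqrt identity
  have hab : ∀ i (k : Fin K → ℕ),
      Real.sqrt ((μ i k * Real.exp (∑ l, θ l * k l)) * (μ i k * Real.exp (∑ l, θ' l * k l)))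
      = μ i k * Real.exp (∑ l, mid l * k l) := by
    intro i k
    have h2 : (∑ l, mid l * (k l : ℝ)) + (∑ l, mid l * (k l : ℝ))
        = (∑ l, θ l * (k l : ℝ)) + ∑ l, θ' l * (k l : ℝ) := by
      rw [← Finset.sum_add_distrib, ← Finset.sum_add_distrib]
      refine Finset.sum_congr rfl fun l _ => ?_
      simp only [hmiddef]
      ring
    have h1 : (μ i k * Real.exp (∑ l, θ l * k l)) * (μ i k * Real.exp (∑ l, θ' l * k l))
        = (μ i k * Real.exp (∑ l, mid l * k l))^2 := by
      calc (μ i k * Real.exp (∑ l, θ l * k l)) * (μ i k * Real.exp (∑ l, θ' l * k l))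
          = (μ i k * μ i k) * Real.exp ((∑ l, θ l * (k l : ℝ)) + ∑ l, θ' l * (k l : ℝ)) := by
            rw [Real.exp_add]; ring
        _ = (μ i k * μ i k) * Real.exp ((∑ l, mid l * (k l : ℝ)) + ∑ l, mid l * (k l : ℝ)) := by
            rw [h2]
        _ = (μ i k * Real.exp (∑ l, mid l * k l))^2 := by rw [Real.exp_add]; ring
    rw [h1, Real.sqrt_sq (mul_nonneg (hpos i k) (Real.exp_pos _).le)]
  have ha0 : ∀ i (k : Fin K → ℕ), 0 ≤ μ i k * Real.exp (∑ l, θ l * k l) :=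
    fun i k => mul_nonneg (hpos i k) (Real.exp_pos _).le
  have hb0 : ∀ i (k : Fin K → ℕ), 0 ≤ μ i k * Real.exp (∑ l, θ' l * k l) :=
    fun i k => mul_nonneg (hpos i k) (Real.exp_pos _).le
  -- midpoint inequality (non-strict, all i)
  have hmid_le : ∀ i, Real.log (Sm i) ≤ (Real.log (Sθ i) + Real.log (Sθ' i)) / 2 := by
    intro i
    have key := tsum_cs (ha0 i) (hb0 i) (summable_exp_w (μ i) (hent i) θ)
      (summable_exp_w (μ i) (hent i) θ')
    have key2 : Sm i ≤ Real.sqrt (Sθ i) * Real.sqrt (Sθ' i) :=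
      le_of_eq_of_le (tsum_congr (hab i)).symm key
    have hlog : Real.log (Sm i) ≤ Real.log (Real.sqrt (Sθ i) * Real.sqrt (Sθ' i)) :=
      (Real.log_le_log_iff (hSmpos i)
        (mul_pos (Real.sqrt_pos.mpr (hSθpos i)) (Real.sqrt_pos.mpr (hSθ'pos i)))).mpr key2
    rw [Real.log_mul (ne_of_gt (Real.sqrt_pos.mpr (hSθpos i)))
      (ne_of_gt (Real.sqrt_pos.mpr (hSθ'pos i))), Real.log_sqrt (hSθpos i).le,
      Real.log_sqrt (hSθ'pos i).le] at hlog
    linarith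
  -- strict midpoint inequality at the nonlocalization index
  obtain ⟨i0, k0, k1, hμ0, hμ1, hZne⟩ := hnonloc Z hZ
  have hk01 : k0 ≠ k1 := fun h => hZne (by rw [h])
  have hmid_lt : Real.log (Sm i0) < (Real.log (Sθ i0) + Real.log (Sθ' i0)) / 2 := by
    have hne2 : (μ i0 k0 * Real.exp (∑ l, θ l * k0 l)) * (μ i0 k1 * Real.exp (∑ l, θ' l * k1 l))
        ≠ (μ i0 k1 * Real.exp (∑ l, θ l * k1 l)) * (μ i0 k0 * Real.exp (∑ l, θ' l * k0 l)) := by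
      intro h
      have h' : (μ i0 k0 * μ i0 k1) * Real.exp ((∑ l, θ l * (k0 l : ℝ)) + ∑ l, θ' l * (k1 l : ℝ))
          = (μ i0 k0 * μ i0 k1) * Real.exp ((∑ l, θ l * (k1 l : ℝ)) + ∑ l, θ' l * (k0 l : ℝ)) := by
        rw [Real.exp_add, Real.exp_add]
        calc (μ i0 k0 * μ i0 k1) * (Real.exp (∑ l, θ l * (k0 l:ℝ)) * Real.exp (∑ l, θ' l * (k1 l:ℝ)))
            = (μ i0 k0 * Real.exp (∑ l, θ l * k0 l)) * (μ i0 k1 * Real.exp (∑ l, θ' l * k1 l)) := by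
              ring
          _ = (μ i0 k1 * Real.exp (∑ l, θ l * k1 l)) * (μ i0 k0 * Real.exp (∑ l, θ' l * k0 l)) := h
          _ = (μ i0 k0 * μ i0 k1) * (Real.exp (∑ l, θ l * (k1 l:ℝ)) * Real.exp (∑ l, θ' l * (k0 l:ℝ))) := by
              ring
      have hμμ : (μ i0 k0 * μ i0 k1) ≠ 0 := ne_of_gt (mul_pos hμ0 hμ1)
      have hE := Real.exp_eq_exp.mp (mul_left_cancel₀ hμμ h')
      apply hZne
      have e0 : ∑ j, Z j * (k0 j : ℝ) = (∑ l, θ' l * (k0 l : ℝ)) - ∑ l, θ l * (k0 l : ℝ) := by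
        rw [← Finset.sum_sub_distrib]
        exact Finset.sum_congr rfl fun l _ => by simp only [hZdef]; ring
      have e1 : ∑ j, Z j * (k1 j : ℝ) = (∑ l, θ' l * (k1 l : ℝ)) - ∑ l, θ l * (k1 l : ℝ) := by
        rw [← Finset.sum_sub_distrib]
        exact Finset.sum_congr rfl fun l _ => by simp only [hZdef]; ring
      rw [e0, e1]
      linarith
    have key := tsum_cs_strict (ha0 i0) (hb0 i0) (summable_exp_w (μ i0) (hent i0) θ)
      (summable_exp_w (μ i0) (hent i0) θ') k0 k1 hk01 hne2
    have key2 : Sm i0 < Real.sqrt (Sθ i0) * Real.sqrt (Sθ' i0) :=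
      lt_of_eq_of_lt (tsum_congr (hab i0)).symm key
    have hlog : Real.log (Sm i0) < Real.log (Real.sqrt (Sθ i0) * Real.sqrt (Sθ' i0)) :=
      Real.log_lt_log (hSmpos i0) key2
    rw [Real.log_mul (ne_of_gt (Real.sqrt_pos.mpr (hSθpos i0)))
      (ne_of_gt (Real.sqrt_pos.mpr (hSθ'pos i0))), Real.log_sqrt (hSθpos i0).le,
      Real.log_sqrt (hSθ'pos i0).le] at hlog
    linarith
  -- weighted strict midpoint inequality
  have hwmid : ∀ (Y : Fin K → ℝ), (∀ i, 0 < Y i) →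
      ∑ i, Y i * Real.log (Sm i)
        < (∑ i, Y i * Real.log (Sθ i)) / 2 + (∑ i, Y i * Real.log (Sθ' i)) / 2 := by
    intro Y hY
    have h1 : ∑ i, Y i * Real.log (Sm i)
        < ∑ i, Y i * ((Real.log (Sθ i) + Real.log (Sθ' i)) / 2) := by
      apply Finset.sum_lt_sum
        (fun i _ => mul_le_mul_of_nonneg_left (hmid_le i) (hY i).le)
        ⟨i0, Finset.mem_univ i0, mul_lt_mul_of_pos_left hmid_lt (hY i0)⟩
    have h2 : ∑ i, Y i * ((Real.log (Sθ i) + Real.log (Sθ' i)) / 2)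
        = (∑ i, Y i * Real.log (Sθ i)) / 2 + (∑ i, Y i * Real.log (Sθ' i)) / 2 := by
      calc ∑ i, Y i * ((Real.log (Sθ i) + Real.log (Sθ' i)) / 2)
          = ∑ i, (Y i * Real.log (Sθ i) / 2 + Y i * Real.log (Sθ' i) / 2) :=
            Finset.sum_congr rfl fun i _ => by ring
        _ = ∑ i, Y i * Real.log (Sθ i) / 2 + ∑ i, Y i * Real.log (Sθ' i) / 2 :=
            Finset.sum_add_distrib
        _ = (∑ i, Y i * Real.log (Sθ i)) / 2 + (∑ i, Y i * Real.log (Sθ' i)) / 2 := by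
            rw [Finset.sum_div, Finset.sum_div]
    linarith
  -- gradient inequalities
  have hg1 : ∑ i, X i * Real.log (Sθ i) + ∑ l, (mid l - θ l) * X l
      ≤ ∑ i, X i * Real.log (Sm i) :=
    grad_key K μ hpos hsum hent θ mid Mθ hMθ X (fun i => (hXpos i).le) hXeig
  have hg2 : ∑ i, X' i * Real.log (Sθ' i) + ∑ l, (mid l - θ' l) * X' l
      ≤ ∑ i, X' i * Real.log (Sm i) :=
    grad_key K μ hpos hsum hent θ' mid Mθ' hMθ' X' (fun i => (hX'pos i).le) hX'eig
  have e1 : ∑ l, (mid l - θ l) * X l = (∑ l, Z l * X l) / 2 := by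
    rw [Finset.sum_div]
    exact Finset.sum_congr rfl fun l _ => by simp only [hmiddef, hZdef]; ring
  have e2 : ∑ l, (mid l - θ' l) * X' l = -((∑ l, Z l * X' l) / 2) := by
    calc ∑ l, (mid l - θ' l) * X' l = ∑ l, -(Z l * X' l / 2) :=
          Finset.sum_congr rfl fun l _ => by simp only [hmiddef, hZdef]; ring
      _ = -∑ l, Z l * X' l / 2 := by rw [Finset.sum_neg_distrib]
      _ = -((∑ l, Z l * X' l) / 2) := by rw [Finset.sum_div]
  -- the two strict inequalities
  have PA : ∑ l, Z l * X l < ∑ i, X i * Real.log (Sθ' i) - ∑ i, X i * Real.log (Sθ i) := by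
    have := hwmid X hXpos
    rw [e1] at hg1
    linarith
  have PB : ∑ i, X' i * Real.log (Sθ' i) - ∑ i, X' i * Real.log (Sθ i) < ∑ l, Z l * X' l := by
    have := hwmid X' hX'pos
    rw [e2] at hg2
    linarith
  -- link with χ
  have hχS : ∀ (t : Fin K → ℝ) i, χ t i =
      Real.log (∑' k : Fin K → ℕ, μ i k * Real.exp (∑ l, t l * k l)) - t i := by
    intro t i
    rw [hχ]
    congr 2
    rw [hφ]
    exact tsum_congr fun k => by rw [prod_exp_pow]
  have SA : 0 < ∑ i, X i * (χ θ' i - χ θ i) := by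
    have expand : ∑ i, X i * (χ θ' i - χ θ i)
        = (∑ i, X i * Real.log (Sθ' i) - ∑ i, X i * Real.log (Sθ i)) - ∑ l, Z l * X l := by
      rw [← Finset.sum_sub_distrib, ← Finset.sum_sub_distrib]
      refine Finset.sum_congr rfl fun i _ => ?_
      rw [hχS θ' i, hχS θ i]
      simp only [hZdef]
      ring
    rw [expand]
    linarith
  have SB : ∑ i, X' i * (χ θ' i - χ θ i) < 0 := by
    have expand : ∑ i, X' i * (χ θ' i - χ θ i)
        = (∑ i, X' i * Real.log (Sθ' i) - ∑ i, X' i * Real.log (Sθ i)) - ∑ l, Z l * X' l := by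
      rw [← Finset.sum_sub_distrib, ← Finset.sum_sub_distrib]
      refine Finset.sum_congr rfl fun i _ => ?_
      rw [hχS θ' i, hχS θ i]
      simp only [hZdef]
      ring
    rw [expand]
    linarith
  -- the Γ computation
  obtain ⟨R, hR⟩ := hequiv
  have hGX : ∀ a, (Γ.map (Int.cast : ℤ → ℝ)).mulVec X a = ∑ i, (Γ a i : ℝ) * X i := by
    intro a
    simp [Matrix.mulVec, dotProduct, Matrix.map_apply]
  have hGX' : ∀ a, (Γ.map (Int.cast : ℤ → ℝ)).mulVec X' a = ∑ i, (Γ a i : ℝ) * X' i := by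
    intro a
    simp [Matrix.mulVec, dotProduct, Matrix.map_apply]
  have hsum_swap : ∀ (Y : Fin K → ℝ),
      ∑ i, Y i * (χ θ' i - χ θ i) = -∑ a, R a * ∑ i, (Γ a i : ℝ) * Y i := by
    intro Y
    have step : ∀ i, Y i * (χ θ' i - χ θ i) = -∑ a, R a * ((Γ a i : ℝ) * Y i) := by
      intro i
      have h1 : χ θ' i - χ θ i = -(χ θ i - χ θ' i) := by ring
      rw [h1, hR i, mul_neg]
      congr 1
      rw [Finset.mul_sum]
      exact Finset.sum_congr rfl fun a _ => by ring
    rw [Finset.sum_congr rfl fun i _ => step i]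
    calc ∑ i, -∑ a, R a * ((Γ a i : ℝ) * Y i)
        = -∑ i, ∑ a, R a * ((Γ a i : ℝ) * Y i) := by rw [Finset.sum_neg_distrib]
      _ = -∑ a, ∑ i, R a * ((Γ a i : ℝ) * Y i) := by rw [Finset.sum_comm]
      _ = -∑ a, R a * ∑ i, (Γ a i : ℝ) * Y i := by
          congr 1
          exact Finset.sum_congr rfl fun a _ => (Finset.mul_sum _ _ _).symm
  have SA' : ∑ a, R a * ∑ i, (Γ a i : ℝ) * X i < 0 := by
    have := hsum_swap X
    rw [this] at SA
    linarith
  have SB' : 0 < ∑ a, R a * ∑ i, (Γ a i : ℝ) * X' i := by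
    have := hsum_swap X'
    rw [this] at SB
    linarith
  -- positivity of ΓX, ΓX'
  have hGXnn : ∀ a, 0 ≤ ∑ i, (Γ a i : ℝ) * X i := fun a =>
    Finset.sum_nonneg fun i _ => mul_nonneg (by exact_mod_cast hΓnonneg a i) (hXpos i).le
  have hGX'nn : ∀ a, 0 ≤ ∑ i, (Γ a i : ℝ) * X' i := fun a =>
    Finset.sum_nonneg fun i _ => mul_nonneg (by exact_mod_cast hΓnonneg a i) (hX'pos i).le
  obtain ⟨a0, i1, hΓa0⟩ : ∃ a i, Γ a i ≠ 0 := by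
    by_contra h
    push_neg at h
    apply hΓ
    ext a i
    exact h a i
  have hΓpos : (0:ℝ) < (Γ a0 i1 : ℝ) := by
    exact_mod_cast lt_of_le_of_ne (hΓnonneg a0 i1) (Ne.symm hΓa0)
  have hGXa0 : 0 < ∑ i, (Γ a0 i : ℝ) * X i := by
    have hterm : 0 < (Γ a0 i1 : ℝ) * X i1 := mul_pos hΓpos (hXpos i1)
    have hle : (Γ a0 i1 : ℝ) * X i1 ≤ ∑ i, (Γ a0 i : ℝ) * X i :=
      Finset.single_le_sum (f := fun i => (Γ a0 i : ℝ) * X i)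
        (fun i _ => mul_nonneg (by exact_mod_cast hΓnonneg a0 i) (hXpos i).le)
        (Finset.mem_univ i1)
    linarith
  -- collinearity cases
  obtain ⟨lam, hc | hc⟩ := hcol
  · have hptw : ∀ a, ∑ i, (Γ a i : ℝ) * X i = lam * ∑ i, (Γ a i : ℝ) * X' i := by
      intro a
      have := congrFun hc a
      rw [Pi.smul_apply, smul_eq_mul] at this
      rw [← hGX a, ← hGX' a, this]
    have hsum_eq : ∑ a, R a * ∑ i, (Γ a i : ℝ) * X i
        = lam * ∑ a, R a * ∑ i, (Γ a i : ℝ) * X' i := by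
      rw [Finset.mul_sum]
      exact Finset.sum_congr rfl fun a _ => by rw [hptw a]; ring
    rw [hsum_eq] at SA'
    have hlam : lam < 0 := by
      rcases mul_neg_iff.mp SA' with ⟨_, h2⟩ | ⟨h1, _⟩
      · linarith
      · exact h1
    have heq0 := hptw a0
    have hneg : lam * ∑ i, (Γ a0 i : ℝ) * X' i ≤ 0 :=
      mul_nonpos_of_nonpos_of_nonneg hlam.le (hGX'nn a0)
    linarith
  · have hptw : ∀ a, ∑ i, (Γ a i : ℝ) * X' i = lam * ∑ i, (Γ a i : ℝ) * X i := by
      intro a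
      have := congrFun hc a
      rw [Pi.smul_apply, smul_eq_mul] at this
      rw [← hGX a, ← hGX' a, this]
    have hsum_eq : ∑ a, R a * ∑ i, (Γ a i : ℝ) * X' i
        = lam * ∑ a, R a * ∑ i, (Γ a i : ℝ) * X i := by
      rw [Finset.mul_sum]
      exact Finset.sum_congr rfl fun a _ => by rw [hptw a]; ring
    have hlam : lam < 0 := by nlinarith
    have := hptw a0
    nlinarith [hGX'nn a0]
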